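/- Let l ≥ 1, n ≥ 1, let |·| be a norm on ℂ^n, and let T be a power bounded linear operator on (ℂ^n, |·|) having n distinct eigenvalues λ_1, …, λ_n, all in the open unit disc 𝔻, with associated Malmquist family (e_k)_{1≤k≤n} and projection P_{B_σ}. Then for every λ ∈ ℂ with |λ| > 1, ‖(λI − T)^{−l}‖ ≤ P(T) · |λ|^{−l} · ‖P_{B_σ}((k_{1/λ̄})^l)‖_W, where k_{1/λ̄}(z) = 1/(1 − z/λ). -/

import Mathlib

open Real
open scoped NNReal ENNReal

/-- The elementary Blaschke factor `b_a(z) = (a - z)/(1 - ā z)`. -/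
noncomputable def blaschkeFactor (a z : ℂ) : ℂ := (a - z) / (1 - (starRingEnd ℂ) a * z)

/-- The Malmquist family associated with `λ_1, …, λ_n ∈ 𝔻`:
`e_k(z) = (∏_{j<k} b_{λ_j}(z)) · (1 - |λ_k|²)^{1/2} / (1 - conj(λ_k) z)`. -/
noncomputable def malmquist {n : ℕ} (lam : Fin n → ℂ) (k : Fin n) (z : ℂ) : ℂ :=
  (∏ j ∈ Finset.Iio k, blaschkeFactor (lam j) z) *
    ((Real.sqrt (1 - ‖lam k‖ ^ 2) : ℂ) / (1 - (starRingEnd ℂ) (lam k) * z))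

/-- The `H²` inner product `⟨u, v⟩ = ∫_𝕋 u conj(v) dm` (normalized Lebesgue measure). -/
noncomputable def h2inner (u v : ℂ → ℂ) : ℂ :=
  (2 * π)⁻¹ • ∫ θ in (0:ℝ)..(2 * π),
    u (Complex.exp (θ * Complex.I)) * (starRingEnd ℂ) (v (Complex.exp (θ * Complex.I)))

/-- The orthogonal projection onto the model space `K_{B_σ}` expressed via the Malmquist
basis: `P_{B_σ} g = ∑_k ⟨g, e_k⟩_{H²} e_k`. -/
noncomputable def projMalmquist {n : ℕ} (lam : Fin n → ℂ) (g : ℂ → ℂ) (z : ℂ) : ℂ :=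
  ∑ k : Fin n, h2inner g (malmquist lam k) * malmquist lam k z

/-- The Wiener algebra norm `‖h‖_W = ∑_{m≥0} |ĥ(m)|`, the Taylor coefficients of `h` at `0`
being `iteratedDeriv m h 0 / m!`. -/
noncomputable def wienerNorm (h : ℂ → ℂ) : ℝ :=
  ∑' m : ℕ, ‖iteratedDeriv m h 0 / (m.factorial : ℂ)‖


lemma one_sub_ne (w : ℂ) (h : ‖w‖ < 1) : 1 - w ≠ 0 := by
  intro h0
  rw [sub_eq_zero] at h0
  rw [← h0] at h
  simp at h

lemma blaschke_term (a w z : ℂ) (ha : ‖a‖ < 1) :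
    (starRingEnd ℂ) ((Real.sqrt (1 - ‖a‖ ^ 2) : ℂ) / (1 - (starRingEnd ℂ) a * w)) *
      ((Real.sqrt (1 - ‖a‖ ^ 2) : ℂ) / (1 - (starRingEnd ℂ) a * z))
    = (1 - (starRingEnd ℂ) a * a) /
        ((1 - a * (starRingEnd ℂ) w) * (1 - (starRingEnd ℂ) a * z)) := by
  have h0 : (0:ℝ) ≤ 1 - ‖a‖ ^ 2 := by nlinarith [norm_nonneg a]
  have hs : (Real.sqrt (1 - ‖a‖ ^ 2) : ℂ) * (Real.sqrt (1 - ‖a‖ ^ 2) : ℂ)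
      = 1 - (starRingEnd ℂ) a * a := by
    rw [← Complex.ofReal_mul, Real.mul_self_sqrt h0]
    have h2 : (starRingEnd ℂ) a * a = ((‖a‖ ^ 2 : ℝ) : ℂ) := by
      rw [mul_comm, Complex.mul_conj, Complex.sq_norm]
    rw [h2]
    push_cast
    ring
  rw [map_div₀, Complex.conj_ofReal, map_sub, map_one, map_mul, Complex.conj_conj,
    div_mul_div_comm, hs]

lemma one_cd' (a lm z : ℂ) (hd1 : 1 - a * (starRingEnd ℂ) lm ≠ 0)
    (hd2 : 1 - (starRingEnd ℂ) a * z ≠ 0) :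
    (starRingEnd ℂ) (blaschkeFactor a lm) * blaschkeFactor a z
      = 1 - (1 - (starRingEnd ℂ) a * a) * (1 - (starRingEnd ℂ) lm * z) /
          ((1 - a * (starRingEnd ℂ) lm) * (1 - (starRingEnd ℂ) a * z)) := by
  unfold blaschkeFactor
  rw [map_div₀, map_sub, map_sub, map_one, map_mul, Complex.conj_conj]
  rw [eq_sub_iff_add_eq, div_mul_div_comm, ← add_div, div_eq_one_iff_eq (mul_ne_zero hd1 hd2)]
  ring

lemma cd_partial {n : ℕ} (lam : Fin n → ℂ) (hmod : ∀ k, ‖lam k‖ < 1)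
    (lm z : ℂ)
    (hdl : ∀ k : Fin n, 1 - lam k * (starRingEnd ℂ) lm ≠ 0)
    (hdz : ∀ k : Fin n, 1 - (starRingEnd ℂ) (lam k) * z ≠ 0) :
    ∀ m, m ≤ n → (1 - (starRingEnd ℂ) lm * z) *
      ∑ k ∈ Finset.univ.filter (fun k : Fin n => (k:ℕ) < m),
        (starRingEnd ℂ) (malmquist lam k lm) * malmquist lam k z
    = 1 - (starRingEnd ℂ)
        (∏ k ∈ Finset.univ.filter (fun k : Fin n => (k:ℕ) < m), blaschkeFactor (lam k) lm) *
      ∏ k ∈ Finset.univ.filter (fun k : Fin n => (k:ℕ) < m), blaschkeFactor (lam k) z := by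
  intro m
  induction m with
  | zero => simp
  | succ m ih =>
    intro hm1
    have hm : m < n := hm1
    specialize ih (le_of_lt hm)
    have hins : Finset.univ.filter (fun k : Fin n => (k:ℕ) < m + 1)
        = insert ⟨m, hm⟩ (Finset.univ.filter (fun k : Fin n => (k:ℕ) < m)) := by
      ext k
      simp [Nat.lt_succ_iff_lt_or_eq, Fin.ext_iff, or_comm]
      omega
    have hnot : (⟨m, hm⟩ : Fin n) ∉ Finset.univ.filter (fun k : Fin n => (k:ℕ) < m) := by simp
    have hIio : Finset.Iio (⟨m, hm⟩ : Fin n)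
        = Finset.univ.filter (fun k : Fin n => (k:ℕ) < m) := by
      ext k; simp [Fin.lt_def]
    rw [hins, Finset.sum_insert hnot, Finset.prod_insert hnot, Finset.prod_insert hnot]
    set a := lam ⟨m, hm⟩ with ha
    set P1 := ∏ k ∈ Finset.univ.filter (fun k : Fin n => (k:ℕ) < m), blaschkeFactor (lam k) lm
      with hP1
    set P2 := ∏ k ∈ Finset.univ.filter (fun k : Fin n => (k:ℕ) < m), blaschkeFactor (lam k) z
      with hP2
    have hmalm_lm : malmquist lam ⟨m, hm⟩ lm
        = P1 * ((Real.sqrt (1 - ‖a‖ ^ 2) : ℂ) / (1 - (starRingEnd ℂ) a * lm)) := by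
      rw [malmquist, hIio]
    have hmalm_z : malmquist lam ⟨m, hm⟩ z
        = P2 * ((Real.sqrt (1 - ‖a‖ ^ 2) : ℂ) / (1 - (starRingEnd ℂ) a * z)) := by
      rw [malmquist, hIio]
    rw [hmalm_lm, hmalm_z, map_mul]
    have hterm := blaschke_term a lm z (hmod _)
    have hcd := one_cd' a lm z (hdl ⟨m, hm⟩) (hdz ⟨m, hm⟩)
    simp only [map_mul]
    linear_combination ih + ((1 - (starRingEnd ℂ) lm * z) * (starRingEnd ℂ) P1 * P2) * hterm
      + ((starRingEnd ℂ) P1 * P2) * hcd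

lemma malmquist_sum {n : ℕ} (lam : Fin n → ℂ) (hmod : ∀ k, ‖lam k‖ < 1)
    (j : Fin n) (z : ℂ) (hz : ‖z‖ ≤ 1) :
    ∑ k : Fin n, (starRingEnd ℂ) (malmquist lam k (lam j)) * malmquist lam k z
      = 1 / (1 - (starRingEnd ℂ) (lam j) * z) := by
  have habs : ∀ w : ℂ, ‖w‖ < 1 → ∀ y : ℂ, ‖y‖ ≤ 1 → 1 - w * y ≠ 0 := by
    intro w hw y hy
    apply one_sub_ne
    rw [norm_mul]
    calc ‖w‖ * ‖y‖ ≤ ‖w‖ * 1 :=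
          mul_le_mul_of_nonneg_left hy (norm_nonneg w)
      _ = ‖w‖ := mul_one _
      _ < 1 := hw
  have hdl : ∀ k : Fin n, 1 - lam k * (starRingEnd ℂ) (lam j) ≠ 0 := fun k =>
    habs _ (hmod k) _ (by rw [Complex.norm_conj]; exact (hmod j).le)
  have hdz : ∀ k : Fin n, 1 - (starRingEnd ℂ) (lam k) * z ≠ 0 := fun k =>
    habs _ (by rw [Complex.norm_conj]; exact hmod k) _ hz
  have hcz : 1 - (starRingEnd ℂ) (lam j) * z ≠ 0 := hdz j
  have hfull : Finset.univ.filter (fun k : Fin n => (k:ℕ) < n) = Finset.univ := by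
    ext k; simp [k.isLt]
  have := cd_partial lam hmod (lam j) z hdl hdz n le_rfl
  rw [hfull] at this
  have hB : ∏ k : Fin n, blaschkeFactor (lam k) (lam j) = 0 := by
    apply Finset.prod_eq_zero (Finset.mem_univ j)
    unfold blaschkeFactor
    rw [sub_self, zero_div]
  rw [hB, map_zero, zero_mul, sub_zero] at this
  rw [eq_div_iff hcz, mul_comm]
  exact this

lemma cont_exp_circle : Continuous fun θ : ℝ => Complex.exp (θ * Complex.I) := by
  exact Complex.continuous_exp.comp ((Complex.continuous_ofReal.mul continuous_const))

lemma abs_exp_circle (θ : ℝ) : ‖Complex.exp (θ * Complex.I)‖ = 1 := by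
  exact Complex.norm_exp_ofReal_mul_I θ

lemma cont_malm_circle {n : ℕ} (lam : Fin n → ℂ) (hmod : ∀ k, ‖lam k‖ < 1)
    (k : Fin n) :
    Continuous fun θ : ℝ => malmquist lam k (Complex.exp (θ * Complex.I)) := by
  have hden : ∀ (a : ℂ), ‖a‖ < 1 → ∀ θ : ℝ,
      1 - (starRingEnd ℂ) a * Complex.exp (θ * Complex.I) ≠ 0 := by
    intro a ha θ
    apply one_sub_ne
    rw [norm_mul, Complex.norm_conj, abs_exp_circle, mul_one]
    exact ha
  unfold malmquist blaschkeFactor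
  apply Continuous.mul
  · apply continuous_finset_prod
    intro i _
    exact (continuous_const.sub cont_exp_circle).div
      (continuous_const.sub (continuous_const.mul cont_exp_circle))
      (fun θ => hden _ (hmod i) θ)
  · exact continuous_const.div
      (continuous_const.sub (continuous_const.mul cont_exp_circle))
      (fun θ => hden _ (hmod k) θ)

lemma cauchy_circle (g : ℂ → ℂ) (hg : DiffContOnCl ℂ g (Metric.ball (0:ℂ) 1))
    (w : ℂ) (hw : ‖w‖ < 1) :
    (2 * π)⁻¹ • ∫ θ in (0:ℝ)..(2 * π),
        g (Complex.exp (θ * Complex.I)) *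
          (Complex.exp (θ * Complex.I) * (Complex.exp (θ * Complex.I) - w)⁻¹)
      = g w := by
  have hw' : w ∈ Metric.ball (0:ℂ) 1 := by
    rw [Metric.mem_ball, dist_zero_right]; exact hw
  have H := hg.circleIntegral_sub_inv_smul hw'
  rw [circleIntegral] at H
  simp only [deriv_circleMap, circleMap, Complex.ofReal_one, one_mul, Complex.ofReal_zero,
    zero_add, smul_eq_mul] at H
  have heq : (fun θ : ℝ => g (Complex.exp (θ * Complex.I)) *
        (Complex.exp (θ * Complex.I) * (Complex.exp (θ * Complex.I) - w)⁻¹))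
      = fun θ : ℝ => Complex.I⁻¹ *
        (Complex.exp (θ * Complex.I) * Complex.I *
          ((Complex.exp (θ * Complex.I) - w)⁻¹ * g (Complex.exp (θ * Complex.I)))) := by
    funext θ
    field_simp
  rw [heq, intervalIntegral.integral_const_mul, H]
  have hπ : (π : ℝ) ≠ 0 := Real.pi_ne_zero
  rw [Complex.real_smul]
  push_cast
  field_simp [Complex.I_ne_zero]

lemma proj_eval {n : ℕ} (lam : Fin n → ℂ) (hmod : ∀ k, ‖lam k‖ < 1)
    (g : ℂ → ℂ) (hg : DiffContOnCl ℂ g (Metric.ball (0:ℂ) 1))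
    (hgc : Continuous fun θ : ℝ => g (Complex.exp (θ * Complex.I)))
    (j : Fin n) :
    projMalmquist lam g (lam j) = g (lam j) := by
  have hconjm : ∀ k : Fin n, Continuous fun θ : ℝ =>
      (starRingEnd ℂ) (malmquist lam k (Complex.exp (θ * Complex.I))) := by
    intro k
    simp only [starRingEnd_apply]
    exact (cont_malm_circle lam hmod k).star
  have key : ∀ θ : ℝ,
      ∑ k : Fin n, g (Complex.exp (θ * Complex.I)) *
          (starRingEnd ℂ) (malmquist lam k (Complex.exp (θ * Complex.I))) *
          malmquist lam k (lam j)
      = g (Complex.exp (θ * Complex.I)) *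
          (Complex.exp (θ * Complex.I) * (Complex.exp (θ * Complex.I) - lam j)⁻¹) := by
    intro θ
    set e := Complex.exp (θ * Complex.I) with he
    have henz : e ≠ 0 := Complex.exp_ne_zero _
    have habse : ‖e‖ = 1 := abs_exp_circle θ
    have hediff : e - lam j ≠ 0 := by
      intro h0
      rw [sub_eq_zero] at h0
      have h1 := hmod j
      rw [← h0, habse] at h1
      exact lt_irrefl 1 h1
    have hsum := malmquist_sum lam hmod j e (le_of_eq habse)
    have hconje : (starRingEnd ℂ) e = e⁻¹ := by
      rw [he, ← Complex.exp_conj, ← Complex.exp_neg]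
      congr 1
      rw [map_mul, Complex.conj_I, Complex.conj_ofReal]
      ring
    have hX : 1 - lam j * e⁻¹ = (e - lam j) * e⁻¹ := by
      field_simp
    calc ∑ k : Fin n, g e * (starRingEnd ℂ) (malmquist lam k e) * malmquist lam k (lam j)
        = g e * ∑ k : Fin n, (starRingEnd ℂ) (malmquist lam k e) * malmquist lam k (lam j) := by
          rw [Finset.mul_sum]; apply Finset.sum_congr rfl; intros; ring
      _ = g e * (starRingEnd ℂ)
            (∑ k : Fin n, (starRingEnd ℂ) (malmquist lam k (lam j)) * malmquist lam k e) := by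
          rw [map_sum]
          congr 1
          apply Finset.sum_congr rfl
          intro k _
          rw [map_mul, Complex.conj_conj]
          ring
      _ = g e * (starRingEnd ℂ) (1 / (1 - (starRingEnd ℂ) (lam j) * e)) := by rw [hsum]
      _ = g e * (e * (e - lam j)⁻¹) := by
          rw [map_div₀, map_one, map_sub, map_one, map_mul, Complex.conj_conj, hconje, hX,
            one_div, mul_inv, inv_inv, mul_comm (e - lam j)⁻¹ e]
  have hintk : ∀ k : Fin n, IntervalIntegrable (fun θ : ℝ =>
      g (Complex.exp (θ * Complex.I)) *
        (starRingEnd ℂ) (malmquist lam k (Complex.exp (θ * Complex.I))) *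
        malmquist lam k (lam j)) MeasureTheory.volume 0 (2 * π) :=
    fun k => (((hgc.mul (hconjm k)).mul continuous_const)).intervalIntegrable _ _
  calc projMalmquist lam g (lam j)
      = (2 * π)⁻¹ • ∑ k : Fin n, (∫ θ in (0:ℝ)..(2 * π),
          g (Complex.exp (θ * Complex.I)) *
            (starRingEnd ℂ) (malmquist lam k (Complex.exp (θ * Complex.I)))) *
          malmquist lam k (lam j) := by
        unfold projMalmquist h2inner
        rw [Finset.smul_sum]
        apply Finset.sum_congr rfl
        intro k _
        rw [smul_mul_assoc]
    _ = (2 * π)⁻¹ • ∫ θ in (0:ℝ)..(2 * π), ∑ k : Fin n,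
          g (Complex.exp (θ * Complex.I)) *
            (starRingEnd ℂ) (malmquist lam k (Complex.exp (θ * Complex.I))) *
            malmquist lam k (lam j) := by
        rw [intervalIntegral.integral_finset_sum (fun k _ => hintk k)]
        congr 1
        apply Finset.sum_congr rfl
        intro k _
        rw [← intervalIntegral.integral_mul_const]
    _ = (2 * π)⁻¹ • ∫ θ in (0:ℝ)..(2 * π),
          g (Complex.exp (θ * Complex.I)) *
            (Complex.exp (θ * Complex.I) * (Complex.exp (θ * Complex.I) - lam j)⁻¹) := by
        congr 1
        apply intervalIntegral.integral_congr
        intro θ _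
        exact key θ
    _ = g (lam j) := cauchy_circle g hg (lam j) (hmod j)

lemma clm_apply_algebraMap_sub {E : Type} [NormedAddCommGroup E] [NormedSpace ℂ E]
    (T : E →L[ℂ] E) (c : ℂ) (x : E) :
    (algebraMap ℂ (E →L[ℂ] E) c - T) x = c • x - T x := by
  rw [ContinuousLinearMap.sub_apply, Algebra.algebraMap_eq_smul_one,
    ContinuousLinearMap.smul_apply, ContinuousLinearMap.one_apply]

lemma clm_isUnit_of_no_eigen {E : Type} [NormedAddCommGroup E] [NormedSpace ℂ E]
    [FiniteDimensional ℂ E] (T : E →L[ℂ] E) (c : ℂ)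
    (h : ∀ v : E, T v = c • v → v = 0) :
    IsUnit (algebraMap ℂ (E →L[ℂ] E) c - T) := by
  set A := algebraMap ℂ (E →L[ℂ] E) c - T with hA
  have h0 : ∀ x : E, A x = 0 → x = 0 := by
    intro x hx
    apply h
    rw [hA, clm_apply_algebraMap_sub] at hx
    rw [← sub_eq_zero, ← neg_sub, neg_eq_zero]
    exact hx
  have hinj : Function.Injective (A : E →ₗ[ℂ] E) := by
    intro x y hxy
    simp only [ContinuousLinearMap.coe_coe] at hxy
    have hz : A (x - y) = 0 := by rw [map_sub, hxy, sub_self]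
    exact sub_eq_zero.mp (h0 _ hz)
  have hsurj := (LinearMap.injective_iff_surjective).mp hinj
  let e := LinearEquiv.ofBijective (A : E →ₗ[ℂ] E) ⟨hinj, hsurj⟩
  let e' := e.toContinuousLinearEquiv
  have hAe : ∀ z, A z = e z := fun z => rfl
  have hsymm : ∀ x, (e'.symm : E →L[ℂ] E) x = e.symm x := fun x =>
    congrFun (LinearEquiv.coe_toContinuousLinearEquiv_symm' e) x
  refine isUnit_iff_exists.mpr ⟨(e'.symm : E →L[ℂ] E), ?_, ?_⟩
  · ext x
    rw [ContinuousLinearMap.mul_apply, ContinuousLinearMap.one_apply, hsymm, hAe,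
      e.apply_symm_apply]
  · ext x
    rw [ContinuousLinearMap.mul_apply, ContinuousLinearMap.one_apply, hsymm, hAe,
      e.symm_apply_apply]

lemma clm_exists_eigen {E : Type} [NormedAddCommGroup E] [NormedSpace ℂ E]
    [FiniteDimensional ℂ E] (T : E →L[ℂ] E) (c : ℂ) (hc : c ∈ spectrum ℂ T) :
    ∃ v : E, v ≠ 0 ∧ T v = c • v := by
  by_contra hcon
  push_neg at hcon
  exact (spectrum.mem_iff.mp hc)
    (clm_isUnit_of_no_eigen T c (fun v hv => by
      by_contra h0
      exact hcon v h0 hv))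

lemma clm_pow_eigen {E : Type} [NormedAddCommGroup E] [NormedSpace ℂ E]
    (M : E →L[ℂ] E) (v : E) (c : ℂ) (h : M v = c • v) (m : ℕ) :
    (M ^ m) v = c ^ m • v := by
  induction m with
  | zero => simp
  | succ m ih =>
    rw [pow_succ, ContinuousLinearMap.mul_apply, h, map_smul, ih, smul_smul, pow_succ]
    rw [mul_comm]

/-- For a power bounded `T` on `(ℂⁿ, |·|)` with `n` distinct eigenvalues
`λ_1, …, λ_n ∈ 𝔻` and `|λ| > 1`,
`‖(λI - T)⁻ˡ‖ ≤ P(T) · |λ|^{-l} · ‖P_{B_σ}((k_{1/λ̄})ˡ)‖_W` where `k_{1/λ̄}(z) = 1/(1 - z/λ)`. -/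
theorem iterated_resolvent_le_proj_wiener
    (l n : ℕ) (hl : 1 ≤ l) (hn : 1 ≤ n)
    (E : Type) [NormedAddCommGroup E] [NormedSpace ℂ E]
    (hdim : Module.finrank ℂ E = n)
    (T : E →L[ℂ] E)
    (hpb : ∃ C : ℝ, ∀ k : ℕ, ‖T ^ k‖ ≤ C)
    (lam : Fin n → ℂ) (hinj : Function.Injective lam)
    (hspec : spectrum ℂ T = Set.range lam)
    (hmod : ∀ j, ‖lam j‖ < 1)
    (μ : ℂ) (hμ : 1 < ‖μ‖) :
    ‖(Ring.inverse (algebraMap ℂ (E →L[ℂ] E) μ - T)) ^ l‖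
      ≤ (⨆ k : ℕ, ‖T ^ k‖) * ‖μ‖⁻¹ ^ l *
        wienerNorm (projMalmquist lam fun z => (1 / (1 - z / μ)) ^ l) := by
  classical
  haveI : Nonempty (Fin n) := ⟨⟨0, by omega⟩⟩
  haveI hfd : FiniteDimensional ℂ E := FiniteDimensional.of_finrank_pos (by rw [hdim]; omega)
  have habsμ0 : (0:ℝ) < ‖μ‖ := lt_trans one_pos hμ
  have hμ0 : μ ≠ 0 := by
    intro h0; rw [h0] at hμ; simp at hμ; linarith
  set g : ℂ → ℂ := fun z => (1 / (1 - z / μ)) ^ l with hgdef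
  -- non-vanishing denominators for g
  have hne1 : ∀ z : ℂ, ‖z‖ ≤ 1 → 1 - z / μ ≠ 0 := by
    intro z hz
    apply one_sub_ne
    rw [norm_div, div_lt_one habsμ0]
    linarith
  -- differentiability of g
  have hgd : DifferentiableOn ℂ g (Metric.closedBall (0:ℂ) 1) := by
    apply DifferentiableOn.pow
    apply DifferentiableOn.div (differentiableOn_const 1)
    · exact (differentiableOn_const 1).sub (differentiable_id.differentiableOn.div_const μ)
    · intro z hz
      exact hne1 z (by simpa using Metric.mem_closedBall.mp hz)
  have hgdc : DiffContOnCl ℂ g (Metric.ball (0:ℂ) 1) :=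
    ⟨hgd.mono Metric.ball_subset_closedBall, by
      rw [closure_ball (0:ℂ) one_ne_zero]; exact hgd.continuousOn⟩
  have hgc : Continuous fun θ : ℝ => g (Complex.exp (θ * Complex.I)) := by
    apply Continuous.pow
    apply Continuous.div continuous_const
    · exact continuous_const.sub
        ((Complex.continuous_exp.comp (Complex.continuous_ofReal.mul continuous_const)).div_const μ)
    · intro θ
      exact hne1 _ (le_of_eq (Complex.norm_exp_ofReal_mul_I θ))
  -- radius r'
  set M : ℝ := Finset.univ.sup' Finset.univ_nonempty (fun j : Fin n => ‖lam j‖)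
    with hMdef
  have hM1 : M < 1 := (Finset.sup'_lt_iff Finset.univ_nonempty).mpr (fun j _ => hmod j)
  have hM0 : 0 ≤ M := by
    obtain ⟨i⟩ := (inferInstance : Nonempty (Fin n))
    exact le_trans (norm_nonneg (lam i))
      (Finset.le_sup' (fun j : Fin n => ‖lam j‖) (Finset.mem_univ i))
  set r' : ℝ := 2 / (1 + M) with hr'def
  have hr1 : 1 < r' := by
    rw [hr'def, lt_div_iff₀ (by linarith)]; linarith
  have hr0 : 0 < r' := lt_trans one_pos hr1
  have hjr : ∀ j : Fin n, ‖lam j‖ * r' < 1 := by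
    intro j
    have h1 : ‖lam j‖ ≤ M :=
      Finset.le_sup' (fun j : Fin n => ‖lam j‖) (Finset.mem_univ j)
    have h2 : M * r' < 1 := by
      rw [hr'def, mul_div_assoc', div_lt_one (by linarith)]; linarith
    calc ‖lam j‖ * r' ≤ M * r' :=
          mul_le_mul_of_nonneg_right h1 (le_of_lt hr0)
      _ < 1 := h2
  -- differentiability of the projected function on the closed ball of radius r'
  set h : ℂ → ℂ := projMalmquist lam g with hhdef
  have hdenball : ∀ z ∈ Metric.closedBall (0:ℂ) r', ∀ k : Fin n,
      1 - (starRingEnd ℂ) (lam k) * z ≠ 0 := by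
    intro z hz k
    apply one_sub_ne
    rw [norm_mul, Complex.norm_conj]
    have hza : ‖z‖ ≤ r' := by
      simpa using Metric.mem_closedBall.mp hz
    calc ‖lam k‖ * ‖z‖ ≤ ‖lam k‖ * r' :=
          mul_le_mul_of_nonneg_left hza (norm_nonneg _)
      _ < 1 := hjr k
  have hdh : DifferentiableOn ℂ h (Metric.closedBall (0:ℂ) r') := by
    have : DifferentiableOn ℂ
        (fun z => ∑ k : Fin n, h2inner g (malmquist lam k) * malmquist lam k z)
        (Metric.closedBall (0:ℂ) r') := by
      apply DifferentiableOn.fun_sum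
      intro k _
      apply DifferentiableOn.const_mul
      unfold malmquist
      apply DifferentiableOn.mul
      · apply DifferentiableOn.fun_finsetProd
        intro i _
        unfold blaschkeFactor
        exact ((differentiableOn_const _).sub differentiable_id.differentiableOn).div
          ((differentiableOn_const 1).sub ((differentiableOn_const _).mul
            differentiable_id.differentiableOn))
          (fun z hz => hdenball z hz i)
      · exact (differentiableOn_const _).div
          ((differentiableOn_const 1).sub ((differentiableOn_const _).mul
            differentiable_id.differentiableOn))
          (fun z hz => hdenball z hz k)
    exact this
  -- power series
  have hcoe : (r'.toNNReal : ℝ) = r' := Real.coe_toNNReal _ (le_of_lt hr0)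
  have hRpos : 0 < r'.toNNReal := Real.toNNReal_pos.mpr hr0
  have hball : HasFPowerSeriesOnBall h (cauchyPowerSeries h 0 r'.toNNReal) 0 r'.toNNReal := by
    apply DifferentiableOn.hasFPowerSeriesOnBall _ hRpos
    rw [hcoe]
    exact hdh
  set p := cauchyPowerSeries h 0 r'.toNNReal with hpdef
  set a : ℕ → ℂ := fun m => p.coeff m with hadef
  have h1rad : ((1:ℝ≥0) : ℝ≥0∞) < p.radius := by
    refine lt_of_lt_of_le ?_ hball.r_le
    rw [ENNReal.coe_lt_coe, ← Real.toNNReal_one]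
    rw [Real.toNNReal_lt_toNNReal_iff hr0]
    exact hr1
  have hsum1 : Summable fun m => ‖a m‖ := by
    have := p.summable_norm_mul_pow h1rad
    simpa [FormalMultilinearSeries.norm_apply_eq_norm_coef] using this
  -- Wiener norm identity
  have hW : wienerNorm h = ∑' m, ‖a m‖ := by
    unfold wienerNorm
    apply tsum_congr
    intro m
    congr 1
    have h6 := hball.factorial_smul (1:ℂ) m
    rw [FormalMultilinearSeries.apply_eq_pow_smul_coeff, one_pow, one_smul] at h6
    rw [iteratedDeriv_eq_iteratedFDeriv, ← h6, nsmul_eq_mul, hadef]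
    have hfne : ((m.factorial : ℂ)) ≠ 0 := Nat.cast_ne_zero.mpr (Nat.factorial_ne_zero m)
    field_simp
  -- hasSum of h at eigenvalues
  have hHS : ∀ j : Fin n, HasSum (fun m => a m * lam j ^ m) (h (lam j)) := by
    intro j
    have hmem : lam j ∈ Metric.eball (0:ℂ) r'.toNNReal := by
      rw [mem_eball_zero_iff, enorm_eq_nnnorm, ENNReal.coe_lt_coe, ← NNReal.coe_lt_coe, coe_nnnorm,
        hcoe]
      linarith [hmod j, hr1]
    have h4 := hball.hasSum hmem
    rw [zero_add] at h4
    have h5 : (fun m => p m fun _ => lam j) = fun m => a m * lam j ^ m := by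
      funext m
      rw [FormalMultilinearSeries.apply_eq_pow_smul_coeff, smul_eq_mul, mul_comm]
    rw [← h5]
    exact h4
  -- power-bound facts
  obtain ⟨C, hC⟩ := hpb
  have hbdd : BddAbove (Set.range fun k : ℕ => ‖T ^ k‖) := ⟨C, by
    rintro x ⟨k, rfl⟩; exact hC k⟩
  set P : ℝ := ⨆ k : ℕ, ‖T ^ k‖ with hPdef
  have hPk : ∀ m : ℕ, ‖T ^ m‖ ≤ P := fun m => le_ciSup hbdd m
  have hP0 : 0 ≤ P := le_trans (norm_nonneg _) (hPk 0)
  -- operator sum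
  have hsummand : ∀ m : ℕ, ‖a m • T ^ m‖ ≤ ‖a m‖ * P := by
    intro m
    rw [norm_smul (a m) (T ^ m)]
    exact mul_le_mul_of_nonneg_left (hPk m) (norm_nonneg _)
  have hnorms : Summable fun m => ‖a m • T ^ m‖ :=
    Summable.of_nonneg_of_le (fun m => norm_nonneg _) hsummand (hsum1.mul_right P)
  have hsop : Summable fun m => a m • T ^ m := hnorms.of_norm
  set S : E →L[ℂ] E := ∑' m, a m • T ^ m with hSdef
  -- eigenvectors
  have hvex : ∀ j : Fin n, ∃ v : E, v ≠ 0 ∧ T v = lam j • v := by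
    intro j
    apply clm_exists_eigen
    rw [hspec]
    exact Set.mem_range_self j
  choose v hv0 hTv using hvex
  have hli : LinearIndependent ℂ v := by
    apply Module.End.eigenvectors_linearIndependent' (T : E →ₗ[ℂ] E) lam hinj v
    intro i
    rw [Module.End.hasEigenvector_iff]
    refine ⟨Module.End.mem_eigenspace_iff.mpr ?_, hv0 i⟩
    simpa using hTv i
  have hcard : Fintype.card (Fin n) = Module.finrank ℂ E := by rw [Fintype.card_fin, hdim]
  set b := basisOfLinearIndependentOfCardEqFinrank hli hcard with hbdef
  have hb : ⇑b = v := coe_basisOfLinearIndependentOfCardEqFinrank hli hcard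
  -- unit
  have hne : ∀ i : Fin n, μ - lam i ≠ 0 := by
    intro i h0
    rw [sub_eq_zero] at h0
    rw [h0] at hμ
    linarith [hmod i]
  have hUnit : IsUnit (algebraMap ℂ (E →L[ℂ] E) μ - T) := by
    apply clm_isUnit_of_no_eigen
    intro w hw
    by_contra h0
    have hμs : μ ∈ spectrum ℂ T := by
      rw [spectrum.mem_iff]
      intro hu
      have hA0 : (algebraMap ℂ (E →L[ℂ] E) μ - T) w = 0 := by
        rw [clm_apply_algebraMap_sub, hw, sub_self]
      obtain ⟨u, hu'⟩ := hu
      have h7 := congrArg (fun N : E →L[ℂ] E => N w) u.inv_mul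
      simp only [ContinuousLinearMap.mul_apply, ContinuousLinearMap.one_apply] at h7
      rw [hu', hA0, map_zero] at h7
      exact h0 h7.symm
    rw [hspec] at hμs
    obtain ⟨i, hi⟩ := hμs
    rw [← hi] at hμ
    linarith [hmod i]
  set R0 := Ring.inverse (algebraMap ℂ (E →L[ℂ] E) μ - T) with hR0def
  have hRmul : R0 * (algebraMap ℂ (E →L[ℂ] E) μ - T) = 1 :=
    Ring.inverse_mul_cancel _ hUnit
  have hRv : ∀ j : Fin n, R0 (v j) = (μ - lam j)⁻¹ • v j := by
    intro j
    have hAv : (algebraMap ℂ (E →L[ℂ] E) μ - T) (v j) = (μ - lam j) • v j := by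
      rw [clm_apply_algebraMap_sub, hTv, sub_smul]
    have h8 := congrArg (fun N : E →L[ℂ] E => N (v j)) hRmul
    simp only [ContinuousLinearMap.mul_apply, ContinuousLinearMap.one_apply] at h8
    rw [hAv, map_smul] at h8
    rw [eq_inv_smul_iff₀ (hne j)]
    exact h8
  -- S on eigenvectors
  have hSv : ∀ j : Fin n, S (v j) = h (lam j) • v j := by
    intro j
    have h2 := ContinuousLinearMap.map_tsum (ContinuousLinearMap.apply ℂ E (v j)) hsop
    have h9 : S (v j) = ∑' m, (a m • T ^ m) (v j) := by simpa using h2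
    rw [h9]
    have h3 : ∀ m : ℕ, (a m • T ^ m) (v j) = (a m * lam j ^ m) • v j := by
      intro m
      rw [ContinuousLinearMap.smul_apply, clm_pow_eigen T (v j) (lam j) (hTv j) m, smul_smul]
    rw [tsum_congr h3, (hHS j).summable.tsum_smul_const, (hHS j).tsum_eq]
  -- key identity
  have hgj : ∀ j : Fin n, h (lam j) = g (lam j) := fun j => proj_eval lam hmod g hgdc hgc j
  have hkey : R0 ^ l = (μ⁻¹) ^ l • S := by
    apply ContinuousLinearMap.coe_injective
    apply Module.Basis.ext b
    intro i
    rw [hb]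
    simp only [ContinuousLinearMap.coe_coe]
    have hL : (R0 ^ l) (v i) = ((μ - lam i)⁻¹) ^ l • v i :=
      clm_pow_eigen R0 (v i) ((μ - lam i)⁻¹) (hRv i) l
    have hscal : ((μ - lam i)⁻¹) ^ l = (μ⁻¹) ^ l * h (lam i) := by
      rw [hgj i]
      show ((μ - lam i)⁻¹) ^ l = (μ⁻¹) ^ l * (1 / (1 - lam i / μ)) ^ l
      rw [← mul_pow]
      congr 1
      rw [one_div, ← mul_inv]
      congr 1
      field_simp
    rw [hL, ContinuousLinearMap.smul_apply, hSv i, hscal, smul_smul]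
  -- conclusion
  have hSnorm : ‖S‖ ≤ P * wienerNorm h := by
    rw [hW]
    calc ‖S‖ ≤ ∑' m, ‖a m • T ^ m‖ := norm_tsum_le_tsum_norm hnorms
      _ ≤ ∑' m, ‖a m‖ * P := Summable.tsum_le_tsum hsummand hnorms (hsum1.mul_right P)
      _ = (∑' m, ‖a m‖) * P := tsum_mul_right
      _ = P * ∑' m, ‖a m‖ := mul_comm _ _
  calc ‖R0 ^ l‖ = ‖μ‖⁻¹ ^ l * ‖S‖ := by
        rw [hkey, norm_smul (μ⁻¹ ^ l) S, norm_pow, norm_inv]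
    _ ≤ ‖μ‖⁻¹ ^ l * (P * wienerNorm h) :=
        mul_le_mul_of_nonneg_left hSnorm (by positivity)
    _ = P * ‖μ‖⁻¹ ^ l * wienerNorm h := by ring
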